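/- The number of tuples (v_1,...,v_{2ν}) ∈ V^{2ν} in which every value appearing in the tuple appears an even number of times is at most C(2ν,ν) · ν! · |V|^ν = (2ν)!/ν! · |V|^ν, for any finite set V and integer ν ≥ 1. -/
import Mathlib

open Finset

namespace Stmt4Aux

variable {α : Type} [DecidableEq α] {n : ℕ}

/-- rank of index `i` among occurrences of the value `f i` -/
def rk (f : Fin n → α) (i : Fin n) : ℕ :=
  (univ.filter fun j => f j = f i ∧ j ≤ i).card

/-- number of occurrences of `x` -/
def cnt (f : Fin n → α) (x : α) : ℕ := (univ.filter fun j => f j = x).card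

lemma rk_pos (f : Fin n → α) (i : Fin n) : 1 ≤ rk f i :=
  Finset.card_pos.mpr ⟨i, by simp⟩

lemma rk_le_cnt (f : Fin n → α) (i : Fin n) : rk f i ≤ cnt f (f i) :=
  Finset.card_le_card (fun k hk => by
    simp only [rk, cnt, mem_filter, mem_univ, true_and] at *; exact hk.1)

lemma rk_inj_aux (f : Fin n → α) {i j : Fin n} (hf : f i = f j) (hij : i ≤ j)
    (hr : rk f j ≤ rk f i) : j ≤ i := by
  have hsub : (univ.filter fun k => f k = f i ∧ k ≤ i)
      ⊆ (univ.filter fun k => f k = f j ∧ k ≤ j) := by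
    intro k hk
    simp only [mem_filter, mem_univ, true_and] at *
    exact ⟨hf ▸ hk.1, le_trans hk.2 hij⟩
  have heq := Finset.eq_of_subset_of_card_le hsub hr
  have hj : j ∈ (univ.filter fun k => f k = f j ∧ k ≤ j) := by simp
  rw [← heq] at hj
  simp only [mem_filter] at hj
  exact hj.2.2

lemma rk_inj (f : Fin n → α) {i j : Fin n} (hf : f i = f j) (hr : rk f i = rk f j) :
    i = j := by
  rcases le_total i j with h | h
  · exact le_antisymm h (rk_inj_aux f hf h hr.ge)
  · exact le_antisymm (rk_inj_aux f hf.symm h hr.le) h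

lemma exists_rk (f : Fin n → α) (x : α) {m : ℕ} (h1 : 1 ≤ m) (h2 : m ≤ cnt f x) :
    ∃ j, f j = x ∧ rk f j = m := by
  have hsurj := Finset.surj_on_of_inj_on_of_card_le
    (s := univ.filter fun j => f j = x) (t := Finset.Icc 1 (cnt f x))
    (fun j _ => rk f j) ?_ ?_ ?_ m (by simp [h1, h2])
  · obtain ⟨a, ha, hma⟩ := hsurj
    simp only [mem_filter, mem_univ, true_and] at ha
    exact ⟨a, ha, hma.symm⟩
  · intro a ha
    simp only [mem_filter, mem_univ, true_and] at ha
    have := rk_le_cnt f a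
    rw [ha] at this
    simp only [Finset.mem_Icc]
    exact ⟨rk_pos f a, this⟩
  · intro a₁ a₂ ha₁ ha₂ h
    simp only [mem_filter, mem_univ, true_and] at ha₁ ha₂
    exact rk_inj f (ha₁.trans ha₂.symm) h
  · rw [Nat.card_Icc]
    simp [cnt]

/-- the partner of `i`: the occurrence of `f i` of rank one higher -/
noncomputable def pt (f : Fin n → α) (i : Fin n) : Fin n :=
  if h : ∃ j, f j = f i ∧ rk f j = rk f i + 1 then h.choose else i

lemma pt_spec (f : Fin n → α) (i : Fin n) (ho : Odd (rk f i)) (he : Even (cnt f (f i))) :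
    f (pt f i) = f i ∧ rk f (pt f i) = rk f i + 1 := by
  have hlt : rk f i < cnt f (f i) :=
    lt_of_le_of_ne (rk_le_cnt f i) (fun h => (Nat.not_odd_iff_even.mpr he) (h ▸ ho))
  have hex : ∃ j, f j = f i ∧ rk f j = rk f i + 1 :=
    exists_rk f (f i) (by omega) hlt
  rw [pt, dif_pos hex]
  exact hex.choose_spec

lemma pt_injOn (f : Fin n → α) (hP : ∀ i, Even (cnt f (f i))) {i j : Fin n}
    (hi : Odd (rk f i)) (hj : Odd (rk f j)) (h : pt f i = pt f j) : i = j := by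
  obtain ⟨hfi, hri⟩ := pt_spec f i hi (hP i)
  obtain ⟨hfj, hrj⟩ := pt_spec f j hj (hP j)
  rw [h] at hfi hri
  exact rk_inj f (hfi.symm.trans hfj) (by omega)

lemma pt_not_odd (f : Fin n → α) {i : Fin n} (hi : Odd (rk f i))
    (he : Even (cnt f (f i))) : ¬ Odd (rk f (pt f i)) := by
  have := (pt_spec f i hi he).2
  rw [Nat.not_odd_iff_even, this]
  exact hi.add_one

lemma L_card (f : Fin n → α) (hP : ∀ i, Even (cnt f (f i))) :
    (univ.filter fun i => Odd (rk f i)).card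
      + (univ.filter fun i => Odd (rk f i)).card = n := by
  have hbij : (univ.filter fun i => Odd (rk f i)).card
      = (univ.filter fun i => ¬ Odd (rk f i)).card := by
    apply Finset.card_bij (fun i _ => pt f i)
    · intro i hi
      simp only [mem_filter, mem_univ, true_and] at *
      exact pt_not_odd f hi (hP i)
    · intro i hi j hj h
      simp only [mem_filter, mem_univ, true_and] at hi hj
      exact pt_injOn f hP hi hj h
    · intro j hj
      simp only [mem_filter, mem_univ, true_and] at hj
      rw [Nat.not_odd_iff_even] at hj
      have h1 : 1 ≤ rk f j := rk_pos f j
      have h2 : 2 ≤ rk f j := by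
        rcases hj with ⟨c, hc⟩; omega
      obtain ⟨i, hfi, hri⟩ := exists_rk f (f j) (m := rk f j - 1) (by omega)
        (le_trans (by omega) (rk_le_cnt f j))
      have hoi : Odd (rk f i) := by
        rw [Nat.odd_iff]; rw [Nat.even_iff] at hj; omega
      refine ⟨i, by simp [hoi], ?_⟩
      obtain ⟨hf1, hr1⟩ := pt_spec f i hoi (by rw [hfi]; exact hP j)
      exact rk_inj f (hf1.trans hfi) (by omega)
  have htot := Finset.card_filter_add_card_filter_not
    (s := (univ : Finset (Fin n))) (fun i => Odd (rk f i))
  rw [Finset.card_univ, Fintype.card_fin] at htot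
  omega

lemma oif_congr {β : Type} [LinearOrder β] {s t : Finset β} (h : s = t) {m : ℕ}
    (hs : s.card = m) (ht : t.card = m) (k : Fin m) :
    (s.orderIsoOfFin hs k : β) = t.orderIsoOfFin ht k := by subst h; rfl

end Stmt4Aux

open Stmt4Aux

theorem stmt_4 (α : Type) [DecidableEq α] (V : Finset α) (ν : ℕ) (hν : 1 ≤ ν) :
    (((Fintype.piFinset fun _ : Fin (2 * ν) => V)).filter
        (fun f => ∀ x ∈ V, Even ((Finset.univ.filter fun i => f i = x).card))).card
      ≤ Nat.choose (2 * ν) ν * ν.factorial * V.card ^ ν := by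
  classical
  have hn0 : 0 < 2 * ν := by omega
  set S := ((Fintype.piFinset fun _ : Fin (2 * ν) => V)).filter
      (fun f => ∀ x ∈ V, Even ((Finset.univ.filter fun i => f i = x).card)) with hSdef
  set L : (Fin (2 * ν) → α) → Finset (Fin (2 * ν)) :=
    fun f => univ.filter fun i => Odd (rk f i) with hLdef
  have hP : ∀ f ∈ S, ∀ i, Even (cnt f (f i)) := by
    intro f hf i
    obtain ⟨hf1, hf2⟩ := mem_filter.mp hf
    exact hf2 (f i) (Fintype.mem_piFinset.mp hf1 i)
  have hLcard : ∀ f ∈ S, (L f).card = ν := by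
    intro f hf
    have := L_card f (hP f hf)
    simp only [hLdef]
    omega
  set e : (Fin (2 * ν) → α) → Fin ν → Fin (2 * ν) := fun f k =>
    if h : (L f).card = ν then ((L f).orderIsoOfFin h k : Fin (2 * ν))
    else ⟨0, hn0⟩ with hedef
  have he : ∀ f (hf : f ∈ S) k, e f k = ((L f).orderIsoOfFin (hLcard f hf) k : Fin (2 * ν)) := by
    intro f hf k
    simp only [hedef, dif_pos (hLcard f hf)]
  have heL : ∀ f (hf : f ∈ S) k, e f k ∈ L f := by
    intro f hf k
    rw [he f hf k]
    exact ((L f).orderIsoOfFin (hLcard f hf) k).2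
  have heOdd : ∀ f (hf : f ∈ S) k, Odd (rk f (e f k)) := by
    intro f hf k
    have := heL f hf k
    simp only [hLdef, mem_filter] at this
    exact this.2
  have heInj : ∀ f (hf : f ∈ S) k₁ k₂, e f k₁ = e f k₂ → k₁ = k₂ := by
    intro f hf k₁ k₂ h
    rw [he f hf k₁, he f hf k₂] at h
    exact ((L f).orderIsoOfFin (hLcard f hf)).injective (Subtype.ext h)
  set Φ : (Fin (2 * ν) → α) → (Fin ν → Fin (2 * ν)) × (Fin ν → α) :=
    fun f => (fun k => pt f (e f k), fun k => f (e f k)) with hΦdef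
  set T := (univ.filter fun σ : Fin ν → Fin (2 * ν) => Function.Injective σ) ×ˢ
      (Fintype.piFinset fun _ : Fin ν => V) with hTdef
  -- the image claim
  have hσInj : ∀ f (hf : f ∈ S), Function.Injective (fun k => pt f (e f k)) := by
    intro f hf k₁ k₂ h
    exact heInj f hf k₁ k₂
      (pt_injOn f (hP f hf) (heOdd f hf k₁) (heOdd f hf k₂) h)
  have himg : ∀ f (hf : f ∈ S),
      Finset.image (fun k => pt f (e f k)) univ = univ \ L f := by
    intro f hf
    apply Finset.eq_of_subset_of_card_le
    · intro j hj
      simp only [Finset.mem_image, mem_univ, true_and] at hj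
      obtain ⟨k, hk⟩ := hj
      rw [mem_sdiff]
      refine ⟨mem_univ _, ?_⟩
      rw [← hk]
      simp only [hLdef, mem_filter, mem_univ, true_and, not_and]
      exact fun h => (pt_not_odd f (heOdd f hf k) (hP f hf (e f k))) h
    · rw [Finset.card_sdiff_of_subset (Finset.subset_univ _),
        Finset.card_image_of_injOn ((hσInj f hf).injOn),
        Finset.card_univ, Finset.card_univ, Fintype.card_fin, Fintype.card_fin,
        hLcard f hf]
      omega
  have hmaps : ∀ f ∈ S, Φ f ∈ T := by
    intro f hf
    rw [hTdef, Finset.mem_product]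
    constructor
    · simp only [mem_filter, mem_univ, true_and]
      exact hσInj f hf
    · rw [Fintype.mem_piFinset]
      intro k
      exact Fintype.mem_piFinset.mp (mem_filter.mp hf).1 (e f k)
  have hinj : Set.InjOn Φ S := by
    intro f₁ hf₁ f₂ hf₂ h
    simp only [Finset.mem_coe] at hf₁ hf₂
    have hσ : ∀ k, pt f₁ (e f₁ k) = pt f₂ (e f₂ k) :=
      fun k => congrFun (congrArg Prod.fst h) k
    have hg : ∀ k, f₁ (e f₁ k) = f₂ (e f₂ k) :=
      fun k => congrFun (congrArg Prod.snd h) k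
    have hLL : L f₁ = L f₂ := by
      have h1 := himg f₁ hf₁
      have h2 := himg f₂ hf₂
      have h12 : Finset.image (fun k => pt f₁ (e f₁ k)) univ
          = Finset.image (fun k => pt f₂ (e f₂ k)) univ := by
        congr 1
        funext k
        exact hσ k
      have hcompl : univ \ L f₁ = univ \ L f₂ := by rw [← h1, h12, h2]
      have e1 := Finset.sdiff_sdiff_eq_self (Finset.subset_univ (L f₁))
      have e2 := Finset.sdiff_sdiff_eq_self (Finset.subset_univ (L f₂))
      rw [← e1, ← e2, hcompl]
    have hee : ∀ k, e f₁ k = e f₂ k := by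
      intro k
      rw [he f₁ hf₁ k, he f₂ hf₂ k]
      exact oif_congr hLL _ _ k
    funext i
    by_cases hi : i ∈ L f₁
    · set k := ((L f₁).orderIsoOfFin (hLcard f₁ hf₁)).symm ⟨i, hi⟩ with hk
      have hki : e f₁ k = i := by
        rw [he f₁ hf₁ k, hk, OrderIso.apply_symm_apply]
      calc f₁ i = f₁ (e f₁ k) := by rw [hki]
        _ = f₂ (e f₂ k) := hg k
        _ = f₂ (e f₁ k) := by rw [hee k]
        _ = f₂ i := by rw [hki]
    · have : i ∈ univ \ L f₁ := by rw [mem_sdiff]; exact ⟨mem_univ _, hi⟩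
      rw [← himg f₁ hf₁] at this
      simp only [Finset.mem_image, mem_univ, true_and] at this
      obtain ⟨k, hk⟩ := this
      have p1 := pt_spec f₁ (e f₁ k) (heOdd f₁ hf₁ k) (hP f₁ hf₁ (e f₁ k))
      have p2 := pt_spec f₂ (e f₂ k) (heOdd f₂ hf₂ k) (hP f₂ hf₂ (e f₂ k))
      calc f₁ i = f₁ (pt f₁ (e f₁ k)) := by rw [hk]
        _ = f₁ (e f₁ k) := p1.1
        _ = f₂ (e f₂ k) := hg k
        _ = f₂ (pt f₂ (e f₂ k)) := p2.1.symm
        _ = f₂ (pt f₁ (e f₁ k)) := by rw [hσ k]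
        _ = f₂ i := by rw [hk]
  have hle : S.card ≤ T.card := Finset.card_le_card_of_injOn Φ hmaps hinj
  have hTcard : T.card = Nat.choose (2 * ν) ν * ν.factorial * V.card ^ ν := by
    rw [hTdef, Finset.card_product]
    have h1 : (univ.filter fun σ : Fin ν → Fin (2 * ν) => Function.Injective σ).card
        = Fintype.card (Fin ν ↪ Fin (2 * ν)) := by
      rw [← Finset.card_univ]
      apply Finset.card_bij
        (fun σ hσ => (⟨σ, (mem_filter.mp hσ).2⟩ : Fin ν ↪ Fin (2 * ν)))
      · intro σ hσ; exact mem_univ _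
      · intro σ₁ h₁ σ₂ h₂ h
        exact congrArg (fun g : Fin ν ↪ Fin (2 * ν) => g.toFun) h
      · intro b _
        refine ⟨b.1, ?_, ?_⟩
        · simp only [mem_filter, mem_univ, true_and]
          exact b.injective
        · rfl
    have h2 : (Fintype.piFinset fun _ : Fin ν => V).card = V.card ^ ν := by
      rw [Fintype.card_piFinset]
      simp
    rw [h1, h2, Fintype.card_embedding_eq, Fintype.card_fin, Fintype.card_fin,
      Nat.descFactorial_eq_factorial_mul_choose]
    ring
  rw [← hTcard]
  exact hle
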